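/- If 2n ≤ L, then P(σ(a) ∉ B for all a ∈ A) ≥ ∏_{i=0}^{n−1} (1 − m/(L − 2i − 1)). -/

import Mathlib

open Finset

/-- A perfect matching of `{1, …, L}`: a fixed-point-free involution of `Fin L`. -/
def FPFInvolution (L : ℕ) : Type := {σ : Equiv.Perm (Fin L) // ∀ x, σ (σ x) = x ∧ σ x ≠ x}

/-- Fixed-point-free involutions of an arbitrary type. -/
abbrev FPFI (α : Type) : Type := {σ : Equiv.Perm α // ∀ x, σ (σ x) = x ∧ σ x ≠ x}

lemma FPFI.nonempty (α : Type) [Fintype α] [DecidableEq α] (h : Even (Fintype.card α)) :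
    Nonempty (FPFI α) := by
  obtain ⟨d, hd⟩ := h
  have e : α ≃ Fin 2 × Fin d := Fintype.equivOfCardEq (by simp [hd]; omega)
  refine ⟨⟨(e.trans ((Equiv.swap (0 : Fin 2) 1).prodCongr (Equiv.refl (Fin d)))).trans e.symm,
    fun x => ⟨?_, ?_⟩⟩⟩
  · simp only [Equiv.trans_apply, Equiv.apply_symm_apply]
    rw [show ((Equiv.prodCongr (Equiv.swap (0:Fin 2) 1) (Equiv.refl (Fin d)))
        ((Equiv.prodCongr (Equiv.swap (0:Fin 2) 1) (Equiv.refl (Fin d))) (e x))) = e x by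
      cases h : e x with
      | mk u v => simp [Equiv.prodCongr_apply, Equiv.swap_apply_self]]
    exact e.symm_apply_apply x
  · intro hx
    have h2 : ∀ v : Fin 2, Equiv.swap (0 : Fin 2) 1 v ≠ v := by decide
    apply h2 (e x).1
    have := congrArg e hx
    simp at this
    exact congrArg Prod.fst this

lemma FPFI.card_congr (α β : Type) [Fintype α] [Fintype β]
    (h : Fintype.card α = Fintype.card β) : Nat.card (FPFI α) = Nat.card (FPFI β) := by
  have e : α ≃ β := Fintype.equivOfCardEq h
  refine Nat.card_congr ((e.permCongr).subtypeEquiv fun σ => ?_)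
  constructor
  · intro hσ x
    refine ⟨?_, ?_⟩
    · simp [Equiv.permCongr_apply, (hσ (e.symm x)).1]
    · simp only [Equiv.permCongr_apply, ne_eq]
      intro hx
      exact (hσ (e.symm x)).2 (by
        have := congrArg e.symm hx
        simpa using this)
  · intro hσ x
    have h1 := (hσ (e x)).1
    have h2 := (hσ (e x)).2
    simp only [Equiv.permCongr_apply, Equiv.symm_apply_apply] at h1 h2
    refine ⟨?_, ?_⟩
    · have := congrArg e.symm h1
      simpa using this
    · intro hx
      exact h2 (by rw [hx])

lemma card_compl_pair {α : Type} [Fintype α] [DecidableEq α] (a b : α) (h : b ≠ a) :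
    Fintype.card {x : α // x ≠ a ∧ x ≠ b} = Fintype.card α - 2 := by
  rw [Fintype.card_subtype]
  have h1 : (univ.filter fun x : α => x ≠ a ∧ x ≠ b) = univ \ {a, b} := by
    ext x; simp [not_or, and_comm]
  rw [h1, card_sdiff_of_subset (subset_univ _), card_univ]
  congr 1
  rw [card_insert_of_notMem (by simp [h.symm]), card_singleton]

lemma card_partition {δ γ : Type} [Fintype δ] [Fintype γ] [DecidableEq δ] [DecidableEq γ]
    (f : δ → γ) (Q : δ → Prop) [DecidablePred Q] :
    Nat.card {x : δ // Q x} = ∑ b : γ, Nat.card {x : δ // f x = b ∧ Q x} := by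
  have e1 : {x : δ // Q x} ≃ Σ b : γ, {x : δ // f x = b ∧ Q x} := by
    refine ((Equiv.sigmaFiberEquiv (fun y : {x : δ // Q x} => f y.1)).symm).trans
      (Equiv.sigmaCongrRight fun b => ?_)
    exact ⟨fun y => ⟨y.1.1, y.2, y.1.2⟩, fun x => ⟨⟨x.1, x.2.2⟩, x.2.1⟩,
      fun _ => rfl, fun _ => rfl⟩
  rw [Nat.card_congr e1, Nat.card_eq_fintype_card, Fintype.card_sigma]
  exact Finset.sum_congr rfl fun b _ => (Nat.card_eq_fintype_card).symm

lemma abs_prod_le (k : ℕ) : ∀ L m : ℕ, 2 * k ≤ L → m ≤ L →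
    ∏ i ∈ range k, |(L : ℝ) - 2 * i - 1 - m| ≤ ∏ i ∈ range k, ((L : ℝ) - 2 * i - 1) := by
  induction k with
  | zero => intro L m _ _; simp
  | succ k ih =>
    intro L m hk hm
    have hmL : (m : ℝ) ≤ (L : ℝ) := Nat.cast_le.2 hm
    have h2k : (2 * k + 2 : ℝ) ≤ (L : ℝ) := by exact_mod_cast (by omega : 2 * k + 2 ≤ L)
    by_cases hc : m + 2 * k + 1 ≤ L
    · refine Finset.prod_le_prod (fun i _ => abs_nonneg _) (fun i hi => ?_)
      have hi' : i ≤ k := by simpa [Nat.lt_succ_iff] using hi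
      have h1 : (0:ℝ) ≤ (L : ℝ) - 2 * i - 1 - m := by
        have h2 : m + 2 * i + 1 ≤ L := by omega
        have h3 := (Nat.cast_le (α := ℝ)).2 h2
        push_cast at h3
        linarith
      rw [abs_of_nonneg h1]
      have h4 : (0:ℝ) ≤ (m:ℝ) := Nat.cast_nonneg m
      linarith
    · push_neg at hc
      have hL2 : 2 ≤ L := by omega
      have hm2 : 2 ≤ m := by omega
      rw [Finset.prod_range_succ, Finset.prod_range_succ']
      have key : ∏ i ∈ range k, |(L : ℝ) - 2 * i - 1 - m|
          ≤ ∏ i ∈ range k, ((L : ℝ) - 2 * (i + 1) - 1) := by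
        have h1 := ih (L - 2) (m - 2) (by omega) (by omega)
        have hcL : ((L - 2 : ℕ) : ℝ) = (L : ℝ) - 2 := by
          push_cast [Nat.cast_sub hL2]; ring
        have hcm : ((m - 2 : ℕ) : ℝ) = (m : ℝ) - 2 := by
          push_cast [Nat.cast_sub hm2]; ring
        rw [hcL, hcm] at h1
        calc ∏ i ∈ range k, |(L : ℝ) - 2 * i - 1 - m|
            = ∏ i ∈ range k, |(L : ℝ) - 2 - 2 * i - 1 - ((m : ℝ) - 2)| := by
              refine Finset.prod_congr rfl fun i _ => ?_
              congr 1; ring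
          _ ≤ ∏ i ∈ range k, ((L : ℝ) - 2 - 2 * i - 1) := h1
          _ = ∏ i ∈ range k, ((L : ℝ) - 2 * (i + 1) - 1) := by
              refine Finset.prod_congr rfl fun i _ => ?_; push_cast; ring
      have last : |(L : ℝ) - 2 * k - 1 - m| ≤ (L : ℝ) - 2 * 0 - 1 := by
        rw [abs_le]
        constructor
        · push_cast; linarith
        · push_cast
          have h4 : (0:ℝ) ≤ (m:ℝ) := Nat.cast_nonneg m
          have h5 : (0:ℝ) ≤ (k:ℝ) := Nat.cast_nonneg k
          linarith
      have hnn : (0:ℝ) ≤ ∏ i ∈ range k, ((L : ℝ) - 2 * (i + 1) - 1) := by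
        refine Finset.prod_nonneg fun i hi => ?_
        have hi' : i < k := Finset.mem_range.1 hi
        have h6 : ((2 * i + 3 : ℕ) : ℝ) ≤ (L : ℝ) := Nat.cast_le.2 (by omega)
        push_cast at h6
        linarith
      calc (∏ i ∈ range k, |(L : ℝ) - 2 * i - 1 - m|) * |(L : ℝ) - 2 * k - 1 - m|
          ≤ (∏ i ∈ range k, ((L : ℝ) - 2 * (i + 1) - 1)) * ((L : ℝ) - 2 * 0 - 1) :=
            mul_le_mul key last (abs_nonneg _) hnn
        _ = _ := by norm_num

lemma prod_factors_le_one (k L m : ℕ) (hk : 2 * k ≤ L) (hm : m ≤ L) :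
    ∏ i ∈ range k, (1 - (m : ℝ) / ((L : ℝ) - 2 * i - 1)) ≤ 1 := by
  have hd : ∀ i ∈ range k, (0:ℝ) < (L : ℝ) - 2 * i - 1 := by
    intro i hi
    have hi' : i < k := Finset.mem_range.1 hi
    have h6 : ((2 * i + 2 : ℕ) : ℝ) ≤ (L : ℝ) := Nat.cast_le.2 (by omega)
    push_cast at h6
    linarith
  have h1 : ∏ i ∈ range k, (1 - (m : ℝ) / ((L : ℝ) - 2 * i - 1))
      = (∏ i ∈ range k, ((L : ℝ) - 2 * i - 1 - m)) / ∏ i ∈ range k, ((L : ℝ) - 2 * i - 1) := by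
    rw [← Finset.prod_div_distrib]
    refine Finset.prod_congr rfl fun i hi => ?_
    rw [sub_div, div_self (ne_of_gt (hd i hi))]
  rw [h1, div_le_one (Finset.prod_pos hd)]
  calc ∏ i ∈ range k, ((L : ℝ) - 2 * i - 1 - m)
      ≤ |∏ i ∈ range k, ((L : ℝ) - 2 * i - 1 - m)| := le_abs_self _
    _ = ∏ i ∈ range k, |(L : ℝ) - 2 * i - 1 - m| := Finset.abs_prod _ _
    _ ≤ _ := abs_prod_le k L m hk hm

section Fiber
variable {α : Type} [Fintype α] [DecidableEq α] (A B : Finset α) (a b : α)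

/-- The underlying function of the lifted permutation. -/
def upFun (hba : b ≠ a) (τ : Equiv.Perm {x : α // x ≠ a ∧ x ≠ b}) : α → α :=
  fun x => if hxa : x = a then b else if hxb : x = b then a else (τ ⟨x, hxa, hxb⟩).1

lemma upFun_invol (hba : b ≠ a) (τ : Equiv.Perm {x : α // x ≠ a ∧ x ≠ b})
    (hτ : ∀ y, τ (τ y) = y) : Function.Involutive (upFun a b hba τ) := by
  intro x
  unfold upFun
  by_cases hxa : x = a
  · subst hxa
    rw [dif_pos rfl, dif_neg hba, dif_pos rfl]
  · by_cases hxb : x = b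
    · subst hxb
      rw [dif_neg hba, dif_pos rfl, dif_pos rfl]
    · rw [dif_neg hxa, dif_neg hxb,
        dif_neg (τ ⟨x, hxa, hxb⟩).2.1, dif_neg (τ ⟨x, hxa, hxb⟩).2.2]
      have : (⟨((τ ⟨x, hxa, hxb⟩) : {x : α // x ≠ a ∧ x ≠ b}).1,
          (τ ⟨x, hxa, hxb⟩).2.1, (τ ⟨x, hxa, hxb⟩).2.2⟩ : {x : α // x ≠ a ∧ x ≠ b})
          = τ ⟨x, hxa, hxb⟩ := rfl
      rw [this, hτ]

noncomputable def fiberEquiv (hba : b ≠ a) (haB : a ∉ B) (hbB : b ∉ B) :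
    {σ : FPFI α // σ.1 a = b ∧ ∀ x ∈ A, σ.1 x ∉ B} ≃
      {τ : FPFI {x : α // x ≠ a ∧ x ≠ b} //
        ∀ x ∈ A.subtype (fun x => x ≠ a ∧ x ≠ b), τ.1 x ∉ B.subtype (fun x => x ≠ a ∧ x ≠ b)} := by
  refine ⟨fun s => ?_, fun t => ?_, ?_, ?_⟩
  · -- down
    obtain ⟨⟨σ, hσ⟩, hab, hgood⟩ := s
    have hb' : σ b = a := by rw [← hab, (hσ a).1]
    have hiff : ∀ x : α, (x ≠ a ∧ x ≠ b) ↔ (σ x ≠ a ∧ σ x ≠ b) := by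
      intro x
      constructor
      · rintro ⟨h1, h2⟩
        refine ⟨fun h => h2 ?_, fun h => h1 ?_⟩
        · rw [← (hσ x).1, h, hab]
        · rw [← (hσ x).1, h, hb']
      · rintro ⟨h1, h2⟩
        refine ⟨fun h => h2 ?_, fun h => h1 ?_⟩
        · rw [h, hab]
        · rw [h, hb']
    refine ⟨⟨σ.subtypePerm (fun x => (hiff x).symm), fun y => ⟨Subtype.ext (hσ y.1).1,
        fun h => (hσ y.1).2 (congrArg Subtype.val h)⟩⟩, ?_⟩
    intro x hx
    rw [Finset.mem_subtype] at hx ⊢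
    exact hgood x.1 hx
  · -- up
    obtain ⟨⟨τ, hτ⟩, hg⟩ := t
    have hf := upFun_invol a b hba τ (fun y => (hτ y).1)
    refine ⟨⟨hf.toPerm, fun x => ⟨hf x, ?_⟩⟩, ?_, ?_⟩
    · show upFun a b hba τ x ≠ x
      unfold upFun
      by_cases hxa : x = a
      · subst hxa; rw [dif_pos rfl]; exact hba
      · by_cases hxb : x = b
        · subst hxb; rw [dif_neg hba, dif_pos rfl]; exact Ne.symm hba
        · rw [dif_neg hxa, dif_neg hxb]
          intro h
          exact (hτ ⟨x, hxa, hxb⟩).2 (Subtype.ext h)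
    · show upFun a b hba τ a = b
      unfold upFun
      rw [dif_pos rfl]
    · intro x hx
      show upFun a b hba τ x ∉ B
      unfold upFun
      by_cases hxa : x = a
      · rw [dif_pos hxa]; exact hbB
      · by_cases hxb : x = b
        · rw [dif_neg hxa, dif_pos hxb]; exact haB
        · rw [dif_neg hxa, dif_neg hxb]
          intro hmem
          exact hg ⟨x, hxa, hxb⟩ (Finset.mem_subtype.2 hx) (Finset.mem_subtype.2 hmem)
  · -- left inverse
    rintro ⟨⟨σ, hσ⟩, hab, hgood⟩
    refine Subtype.ext (Subtype.ext (Equiv.ext fun x => ?_))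
    show upFun a b hba _ x = σ x
    unfold upFun
    by_cases hxa : x = a
    · subst hxa; rw [dif_pos rfl, hab]
    · by_cases hxb : x = b
      · subst hxb
        rw [dif_neg hxa, dif_pos rfl, ← hab, (hσ a).1]
      · rw [dif_neg hxa, dif_neg hxb]
        rfl
  · -- right inverse
    rintro ⟨⟨τ, hτ⟩, hg⟩
    refine Subtype.ext (Subtype.ext (Equiv.ext fun y => Subtype.ext ?_))
    show upFun a b hba τ y.1 = (τ y).1
    unfold upFun
    rw [dif_neg y.2.1, dif_neg y.2.2]

end Fiber

lemma fpfi_card_pos (α : Type) [Fintype α] [DecidableEq α] (h : Even (Fintype.card α)) :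
    0 < Nat.card (FPFI α) := by
  haveI := FPFI.nonempty α h
  exact Nat.card_pos

lemma main_bound (k : ℕ) : ∀ (α : Type) [Fintype α] [DecidableEq α] (A B : Finset α),
    Disjoint A B → A.card ≤ k → 2 * k ≤ Fintype.card α → Even (Fintype.card α) →
    ∏ i ∈ range k, (1 - (B.card : ℝ) / ((Fintype.card α : ℝ) - 2 * i - 1)) ≤
      (Nat.card {σ : FPFI α // ∀ x ∈ A, σ.1 x ∉ B} : ℝ) / (Nat.card (FPFI α) : ℝ) := by
  induction k with
  | zero =>
    intro α _ _ A B hAB hA hk hEven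
    have hAe : A = ∅ := Finset.card_eq_zero.1 (Nat.le_zero.1 hA)
    subst hAe
    have h1 : Nat.card {σ : FPFI α // ∀ x ∈ (∅ : Finset α), σ.1 x ∉ B} = Nat.card (FPFI α) :=
      Nat.card_congr (Equiv.subtypeUnivEquiv fun σ => by simp)
    rw [h1, div_self (by exact_mod_cast (fpfi_card_pos α hEven).ne')]
    simp
  | succ k ih =>
    intro α _ _ A B hAB hA hk hEven
    by_cases hAe : A = ∅
    · subst hAe
      have h1 : Nat.card {σ : FPFI α // ∀ x ∈ (∅ : Finset α), σ.1 x ∉ B} = Nat.card (FPFI α) :=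
        Nat.card_congr (Equiv.subtypeUnivEquiv fun σ => by simp)
      rw [h1, div_self (by exact_mod_cast (fpfi_card_pos α hEven).ne')]
      exact prod_factors_le_one (k + 1) (Fintype.card α) B.card hk
        (le_trans (Finset.card_le_univ B) (le_of_eq Finset.card_univ))
    · obtain ⟨a, ha⟩ := Finset.nonempty_iff_ne_empty.2 hAe
      have haB : a ∉ B := Finset.disjoint_left.1 hAB ha
      have hL2 : 2 * k + 2 ≤ Fintype.card α := by omega
      have hEven2 : Even (Fintype.card α - 2) := by
        rw [Nat.even_iff] at hEven ⊢; omega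
      have hT2pos : 0 < Nat.card (FPFI (Fin (Fintype.card α - 2))) := by
        refine fpfi_card_pos _ ?_
        rwa [Fintype.card_fin]
      set L : ℕ := Fintype.card α with hLdef
      set m : ℕ := B.card with hmdef
      set T2 : ℕ := Nat.card (FPFI (Fin (L - 2))) with hT2def
      -- per-b card of the FPFI of the complement
      have hcompl : ∀ b : α, b ≠ a → Nat.card (FPFI {x : α // x ≠ a ∧ x ≠ b}) = T2 := by
        intro b hb
        refine FPFI.card_congr _ _ ?_
        rw [card_compl_pair a b hb, Fintype.card_fin]
      -- total count
      have htotal : Nat.card (FPFI α) = (L - 1) * T2 := by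
        have h0 : Nat.card (FPFI α) = Nat.card {σ : FPFI α // (fun _ => True) σ} :=
          (Nat.card_congr (Equiv.subtypeUnivEquiv fun _ => trivial)).symm
        rw [h0, card_partition (fun σ : FPFI α => σ.1 a) (fun _ => True)]
        have hval : ∀ b : α, b ≠ a →
            Nat.card {σ : FPFI α // σ.1 a = b ∧ (fun _ => True) σ} = T2 := by
          intro b hb
          have e1 : {σ : FPFI α // σ.1 a = b ∧ (fun _ => True) σ} ≃
              {σ : FPFI α // σ.1 a = b ∧ ∀ x ∈ (∅ : Finset α), σ.1 x ∉ (∅ : Finset α)} :=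
            Equiv.subtypeEquivRight (by simp)
          have e2 := fiberEquiv (∅ : Finset α) (∅ : Finset α) a b hb
            (Finset.notMem_empty a) (Finset.notMem_empty b)
          have e3 : {τ : FPFI {x : α // x ≠ a ∧ x ≠ b} //
              ∀ x ∈ (∅ : Finset α).subtype (fun x => x ≠ a ∧ x ≠ b),
                τ.1 x ∉ (∅ : Finset α).subtype (fun x => x ≠ a ∧ x ≠ b)} ≃
              FPFI {x : α // x ≠ a ∧ x ≠ b} :=
            Equiv.subtypeUnivEquiv (fun τ => by simp)
          rw [Nat.card_congr ((e1.trans e2).trans e3), hcompl b hb]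
        have hzero : Nat.card {σ : FPFI α // σ.1 a = a ∧ (fun _ => True) σ} = 0 := by
          have : IsEmpty {σ : FPFI α // σ.1 a = a ∧ (fun _ => True) σ} :=
            ⟨fun σ => (σ.1.2 a).2 σ.2.1⟩
          exact Nat.card_of_isEmpty
        rw [← Finset.sum_erase_add _ _ (Finset.mem_univ a), hzero, Nat.add_zero]
        rw [Finset.sum_congr rfl (fun b hb => hval b (Finset.ne_of_mem_erase hb)),
          Finset.sum_const, Finset.card_erase_of_mem (Finset.mem_univ a), Finset.card_univ,
          smul_eq_mul]
      -- good count decomposition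
      have hgoodsum : Nat.card {σ : FPFI α // ∀ x ∈ A, σ.1 x ∉ B} =
          ∑ b : α, Nat.card {σ : FPFI α // σ.1 a = b ∧ ∀ x ∈ A, σ.1 x ∉ B} :=
        card_partition (fun σ : FPFI α => σ.1 a) _
      -- the sub-product
      set P : ℝ := ∏ i ∈ range k, (1 - (m : ℝ) / ((L : ℝ) - 2 - 2 * i - 1)) with hPdef
      -- per-b lower bound
      have hcb : ∀ b : α, b ≠ a → b ∉ B →
          P * T2 ≤ (Nat.card {σ : FPFI α // σ.1 a = b ∧ ∀ x ∈ A, σ.1 x ∉ B} : ℝ) := by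
        intro b hb hbB
        have hcardβ : Fintype.card {x : α // x ≠ a ∧ x ≠ b} = L - 2 := card_compl_pair a b hb
        have hdisj : Disjoint (A.subtype (fun x => x ≠ a ∧ x ≠ b))
            (B.subtype (fun x => x ≠ a ∧ x ≠ b)) := by
          rw [Finset.disjoint_left]
          intro x hx1 hx2
          rw [Finset.mem_subtype] at hx1 hx2
          exact Finset.disjoint_left.1 hAB hx1 hx2
        have hcardA' : (A.subtype (fun x => x ≠ a ∧ x ≠ b)).card ≤ k := by
          rw [Finset.card_subtype]
          have hsub : A.filter (fun x => x ≠ a ∧ x ≠ b) ⊆ A.erase a := by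
            intro x hx
            rw [Finset.mem_filter] at hx
            exact Finset.mem_erase.2 ⟨hx.2.1, hx.1⟩
          calc (A.filter (fun x => x ≠ a ∧ x ≠ b)).card ≤ (A.erase a).card :=
                Finset.card_le_card hsub
            _ = A.card - 1 := Finset.card_erase_of_mem ha
            _ ≤ k := by omega
        have hcardB' : (B.subtype (fun x => x ≠ a ∧ x ≠ b)).card = m := by
          rw [Finset.card_subtype, Finset.filter_true_of_mem]
          intro x hx
          exact ⟨fun h => haB (h ▸ hx), fun h => hbB (h ▸ hx)⟩
        have hIH := ih {x : α // x ≠ a ∧ x ≠ b} (A.subtype _) (B.subtype _) hdisj hcardA'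
          (by rw [hcardβ]; omega) (by rw [hcardβ]; exact hEven2)
        rw [hcardβ, hcardB'] at hIH
        have hLcast : ((L - 2 : ℕ) : ℝ) = (L : ℝ) - 2 := by
          have h2L : (2:ℕ) ≤ L := by omega
          push_cast [Nat.cast_sub h2L]; ring
        rw [hLcast, hcompl b hb] at hIH
        rw [Nat.card_congr (fiberEquiv A B a b hb haB hbB)]
        have hT2posR : (0 : ℝ) < (T2 : ℝ) := by exact_mod_cast hT2pos
        exact (le_div_iff₀ hT2posR).1 hIH
      -- assemble
      have hT2posR : (0 : ℝ) < (T2 : ℝ) := by exact_mod_cast hT2pos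
      have hm1L : m + 1 ≤ L := by
        have h1 : (insert a B).card ≤ L := le_trans (Finset.card_le_univ _)
          (le_of_eq Finset.card_univ)
        rw [Finset.card_insert_of_notMem haB] at h1
        omega
      have hScard : (univ \ insert a B).card = L - (m + 1) := by
        rw [Finset.card_sdiff_of_subset (Finset.subset_univ _), Finset.card_univ,
          Finset.card_insert_of_notMem haB]
      have hGreal : ((L : ℝ) - 1 - m) * (P * T2) ≤
          (Nat.card {σ : FPFI α // ∀ x ∈ A, σ.1 x ∉ B} : ℝ) := by
        rw [hgoodsum]
        push_cast
        calc ((L : ℝ) - 1 - m) * (P * T2)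
            = ∑ _b ∈ univ \ insert a B, P * T2 := by
              rw [Finset.sum_const, hScard, nsmul_eq_mul]
              have : ((L - (m + 1) : ℕ) : ℝ) = (L : ℝ) - 1 - m := by
                push_cast [Nat.cast_sub hm1L]; ring
              rw [this]
          _ ≤ ∑ b ∈ univ \ insert a B,
              (Nat.card {σ : FPFI α // σ.1 a = b ∧ ∀ x ∈ A, σ.1 x ∉ B} : ℝ) := by
              refine Finset.sum_le_sum fun b hb => ?_
              rw [Finset.mem_sdiff, Finset.mem_insert] at hb
              push_neg at hb
              exact hcb b hb.2.1 hb.2.2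
          _ ≤ ∑ b : α, (Nat.card {σ : FPFI α // σ.1 a = b ∧ ∀ x ∈ A, σ.1 x ∉ B} : ℝ) := by
              refine Finset.sum_le_sum_of_subset_of_nonneg (Finset.subset_univ _) ?_
              intro b _ _
              exact Nat.cast_nonneg _
      have hL1 : (0 : ℝ) < (L : ℝ) - 1 := by
        have : ((2 : ℕ) : ℝ) ≤ (L : ℝ) := Nat.cast_le.2 (by omega)
        push_cast at this; linarith
      have hTreal : (Nat.card (FPFI α) : ℝ) = ((L : ℝ) - 1) * T2 := by
        rw [htotal]
        push_cast [Nat.cast_sub (show 1 ≤ L by omega)]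
        ring
      rw [Finset.prod_range_succ']
      have hprodeq : (∏ i ∈ range k, (1 - (m : ℝ) / ((L : ℝ) - 2 * (↑(i + 1)) - 1))) = P := by
        refine Finset.prod_congr rfl fun i _ => ?_
        congr 1
        congr 1
        push_cast
        ring
      rw [hprodeq]
      have hden : (0 : ℝ) < ((L : ℝ) - 1) * T2 := mul_pos hL1 hT2posR
      calc P * (1 - (m : ℝ) / ((L : ℝ) - 2 * (0 : ℕ) - 1))
          = (((L : ℝ) - 1 - m) * (P * T2)) / (((L : ℝ) - 1) * T2) := by
            push_cast
            field_simp [hL1.ne', hT2posR.ne']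
            ring
        _ ≤ (Nat.card {σ : FPFI α // ∀ x ∈ A, σ.1 x ∉ B} : ℝ) / (((L : ℝ) - 1) * T2) := by
            gcongr
        _ = _ := by rw [hTreal]

/-- **Lower bound for avoidance probabilities of a uniform random perfect matching.**
Let `σ` be a uniformly random perfect matching (fixed-point-free involution) of `{1, …, L}`
(`L` even), and let `A`, `B` be disjoint subsets with `|A| = n`, `|B| = m`.  If `2n ≤ L`,
then `P(σ(a) ∉ B for all a ∈ A) ≥ ∏_{i=0}^{n−1} (1 − m/(L − 2i − 1))`. -/
theorem matching_avoid_lower_bound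
    (L : ℕ) (hL : Even L) (hLpos : 0 < L)
    (A B : Finset (Fin L)) (hAB : Disjoint A B)
    (n m : ℕ) (hA : A.card = n) (hB : B.card = m)
    (h2n : 2 * n ≤ L) :
    (∏ i ∈ range n, (1 - (m : ℝ) / ((L : ℝ) - 2 * i - 1)))
      ≤ ((Nat.card {σ : FPFInvolution L // ∀ a ∈ A, σ.1 a ∉ B}) : ℝ)
          / ((Nat.card (FPFInvolution L)) : ℝ) := by
  have := main_bound n (Fin L) A B hAB (le_of_eq hA)
    (by simpa using h2n) (by simpa using hL)
  rw [Fintype.card_fin, hB] at this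
  exact this
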